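/- Let k ≥ 4. Let a and b be distinct vertices of the circular clique G_{2k−1,2} that are not adjacent in G_{2k−1,2}. Let L be a list assignment on the vertices of the complete graph on k − 1 vertices such that every list L(v) equals either N(a) or N(b), the neighbourhood in G_{2k−1,2} of a or of b respectively, and both lists occur. Then there is a map f from the vertices to ZMod(2k−1) with f(v) ∈ L(v) for every vertex v and with f(u) adjacent to f(v) in G_{2k−1,2} for all distinct vertices u, v. -/

import Mathlib

open SimpleGraph

/-- The circular clique `G_{p,q}` on vertex set `ZMod p`. -/
def circClique (p q : ℕ) : SimpleGraph (ZMod p) where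
  Adj i j := i ≠ j ∧ (q ≤ (i - j).val ∧ (i - j).val ≤ p - q)
    ∧ (q ≤ (j - i).val ∧ (j - i).val ≤ p - q)
  symm := ⟨fun _ _ ⟨h, h1, h2⟩ => ⟨h.symm, h2, h1⟩⟩
  loopless := ⟨fun _ h => h.1 rfl⟩

/-- `G` admits a `(p,q)`-circular colouring. -/
def HasCircColoring {V : Type*} (G : SimpleGraph V) (p q : ℕ) : Prop :=
  Nonempty (G →g circClique p q)

/-- A graph is 4-critical. -/
def FourCritical {V : Type*} (G : SimpleGraph V) : Prop :=
  ¬ G.Colorable 3 ∧ ∀ e ∈ G.edgeSet, (G.deleteEdges {e}).Colorable 3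

/-- The wheel on `n` vertices: a cycle on `n-1` vertices plus a hub. -/
def wheel (n : ℕ) : SimpleGraph (Option (Fin (n - 1))) where
  Adj u v := match u, v with
    | none, none => False
    | none, some _ => True
    | some _, none => True
    | some i, some j => (cycleGraph (n - 1)).Adj i j
  symm := by refine ⟨?_⟩; rintro (_|i) (_|j) h <;> simp_all <;> exact h.symm
  loopless := by refine ⟨?_⟩; rintro (_|i) h <;> simp_all


lemma adj_offset {p : ℕ} [NeZero p] (hp : 5 ≤ p) (a : ZMod p) (m : ℕ)
    (h1 : 2 ≤ m) (h2 : m ≤ p - 2) : (circClique p 2).Adj a (a + m) := by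
  have hmp : m < p := by omega
  have hval : ((m : ZMod p)).val = m := ZMod.val_cast_of_lt hmp
  have hne : (m : ZMod p) ≠ 0 := by
    intro h; rw [h, ZMod.val_zero] at hval; omega
  have e1 : a + (m : ZMod p) - a = (m : ZMod p) := by ring
  have e2 : a - (a + (m : ZMod p)) = -(m : ZMod p) := by ring
  have hneg : ((-(m : ZMod p)).val) = p - m := by
    rw [ZMod.neg_val, if_neg hne, hval]
  refine ⟨?_, ?_, ?_⟩
  · intro h
    apply hne
    have := congrArg (· - a) h
    simpa using this.symm
  · rw [e2, hneg]; omega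
  · rw [e1, hval]; omega

lemma nbhd_ne {p : ℕ} [NeZero p] (hp : 5 ≤ p) (a : ZMod p) :
    (circClique p 2).neighborSet a ≠ (circClique p 2).neighborSet (a + 1) := by
  intro h
  have h2 : a + ((2:ℕ) : ZMod p) ∈ (circClique p 2).neighborSet a :=
    adj_offset hp a 2 le_rfl (by omega)
  rw [h] at h2
  have hadj : (circClique p 2).Adj (a+1) (a + ((2:ℕ):ZMod p)) := h2
  have e : a + ((2:ℕ):ZMod p) - (a + 1) = 1 := by push_cast; ring
  have hv : (a + ((2:ℕ):ZMod p) - (a + 1)).val = 1 := by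
    rw [e, ← Nat.cast_one, ZMod.val_cast_of_lt (by omega)]
  have := hadj.2.2.1
  omega

lemma key (k : ℕ) (hk : 4 ≤ k) (a : ZMod (2 * k - 1))
    (L : Fin (k - 1) → Set (ZMod (2 * k - 1)))
    (hL : ∀ v, L v = (circClique (2 * k - 1) 2).neighborSet a ∨
      L v = (circClique (2 * k - 1) 2).neighborSet (a + 1))
    (ha : ∃ v, L v = (circClique (2 * k - 1) 2).neighborSet a)
    (hb : ∃ v, L v = (circClique (2 * k - 1) 2).neighborSet (a + 1)) :
    ∃ f : Fin (k - 1) → ZMod (2 * k - 1), (∀ v, f v ∈ L v) ∧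
      ∀ u v, u ≠ v → (circClique (2 * k - 1) 2).Adj (f u) (f v) := by
  haveI : NeZero (2 * k - 1) := ⟨by omega⟩
  have hp : 5 ≤ 2 * k - 1 := by omega
  obtain ⟨va, hva⟩ := ha
  obtain ⟨vb, hvb⟩ := hb
  have hvab : va ≠ vb := by
    intro h; apply nbhd_ne hp a; rw [← hva, h, hvb]
  let z : Fin (k - 1) := ⟨0, by omega⟩
  let t : Fin (k - 1) := ⟨k - 2, by omega⟩
  have hzt : z ≠ t := by
    intro h; have := congrArg Fin.val h; simp only [z, t] at this; omega
  let σ : Equiv.Perm (Fin (k - 1)) :=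
    (Equiv.swap ((Equiv.swap va z) vb) t) * (Equiv.swap va z)
  have hσa : σ va = z := by
    have h1 : (Equiv.swap va z) va = z := Equiv.swap_apply_left va z
    have hw : (Equiv.swap va z) vb ≠ z := by
      intro h
      exact hvab ((Equiv.swap va z).injective (h.trans h1.symm)).symm
    simp only [σ, Equiv.Perm.mul_apply, h1]
    exact Equiv.swap_apply_of_ne_of_ne hw.symm hzt
  have hσb : σ vb = t := by
    simp only [σ, Equiv.Perm.mul_apply]
    exact Equiv.swap_apply_left _ t
  refine ⟨fun v => a + ((2 + 2 * (σ v).val : ℕ) : ZMod (2 * k - 1)), ?_, ?_⟩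
  · intro v
    have hiv : (σ v).val < k - 1 := (σ v).isLt
    rcases hL v with h | h
    · have hne : (σ v).val ≠ k - 2 := by
        intro hv
        have h1 : σ v = t := Fin.ext hv
        have h2 : v = vb := σ.injective (h1.trans hσb.symm)
        apply nbhd_ne hp a
        rw [← h, h2, hvb]
      rw [h]
      exact adj_offset hp a _ (by omega) (by omega)
    · have hne : (σ v).val ≠ 0 := by
        intro hv
        have h1 : σ v = z := Fin.ext hv
        have h2 : v = va := σ.injective (h1.trans hσa.symm)
        apply nbhd_ne hp a
        rw [← hva, ← h, h2]
      rw [h]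
      have e : a + ((2 + 2 * (σ v).val : ℕ) : ZMod (2 * k - 1))
          = (a + 1) + ((1 + 2 * (σ v).val : ℕ) : ZMod (2 * k - 1)) := by
        push_cast; ring
      simp only [SimpleGraph.mem_neighborSet]
      rw [e]
      exact adj_offset hp (a + 1) _ (by omega) (by omega)
  · intro u v huv
    have hij : σ u ≠ σ v := fun h => huv (σ.injective h)
    have adj_of_lt : ∀ x y : Fin (k - 1), x.val < y.val →
        (circClique (2 * k - 1) 2).Adj
          (a + ((2 + 2 * x.val : ℕ) : ZMod (2 * k - 1)))
          (a + ((2 + 2 * y.val : ℕ) : ZMod (2 * k - 1))) := by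
      intro x y hxy
      have hy : y.val < k - 1 := y.isLt
      have ecast : ((2 + 2 * y.val : ℕ) : ZMod (2 * k - 1))
          = ((2 + 2 * x.val : ℕ) : ZMod (2 * k - 1))
            + ((2 * (y.val - x.val) : ℕ) : ZMod (2 * k - 1)) := by
        rw [← Nat.cast_add]; congr 1; omega
      rw [ecast, ← add_assoc]
      exact adj_offset hp _ _ (by omega) (by omega)
    rcases lt_trichotomy (σ u).val (σ v).val with h | h | h
    · exact adj_of_lt _ _ h
    · exact absurd (Fin.ext h) hij
    · exact (adj_of_lt _ _ h).symm

/-- A `(2k-1,2)`-near-uniform list assignment (lists are the neighbourhoods in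
`G_{2k-1,2}` of two fixed non-adjacent vertices, both occurring) on `K_{k-1}` admits a
list `(2k-1,2)`-colouring. -/
theorem stmt_9 (k : ℕ) (hk : 4 ≤ k) (a b : ZMod (2 * k - 1)) (hab : a ≠ b)
    (hnadj : ¬ (circClique (2 * k - 1) 2).Adj a b)
    (L : Fin (k - 1) → Set (ZMod (2 * k - 1)))
    (hL : ∀ v, L v = (circClique (2 * k - 1) 2).neighborSet a ∨
      L v = (circClique (2 * k - 1) 2).neighborSet b)
    (ha : ∃ v, L v = (circClique (2 * k - 1) 2).neighborSet a)
    (hb : ∃ v, L v = (circClique (2 * k - 1) 2).neighborSet b) :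
    ∃ f : Fin (k - 1) → ZMod (2 * k - 1), (∀ v, f v ∈ L v) ∧
      ∀ u v, u ≠ v → (circClique (2 * k - 1) 2).Adj (f u) (f v) := by
  haveI : NeZero (2 * k - 1) := ⟨by omega⟩
  have hp : 5 ≤ 2 * k - 1 := by omega
  have hd0 : (b - a).val ≠ 0 := by
    intro h
    apply hab
    have h2 : b - a = 0 := by rwa [← ZMod.val_eq_zero]
    linear_combination -h2
  have hdlt : (b - a).val < 2 * k - 1 := ZMod.val_lt _
  have hbeq : b = a + (((b - a).val : ℕ) : ZMod (2 * k - 1)) := by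
    rw [ZMod.natCast_rightInverse (b - a)]; ring
  have hcases : (b - a).val = 1 ∨ (b - a).val = 2 * k - 2 := by
    by_contra hcon
    push_neg at hcon
    apply hnadj
    rw [hbeq]
    exact adj_offset hp a _ (by omega) (by omega)
  rcases hcases with hd1 | hd1
  · have hb1 : b = a + 1 := by rw [hbeq, hd1, Nat.cast_one]
    subst hb1
    exact key k hk a L hL ha hb
  · have hb2 : a = b + 1 := by
      have e0 : (((b - a).val : ℕ) : ZMod (2 * k - 1)) + 1 = 0 := by
        have h1 : ((2 * k - 2 : ℕ) : ZMod (2 * k - 1)) + 1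
            = ((2 * k - 2 + 1 : ℕ) : ZMod (2 * k - 1)) := by push_cast; ring
        rw [hd1, h1, show 2 * k - 2 + 1 = 2 * k - 1 by omega, ZMod.natCast_self]
      rw [hbeq, add_assoc, e0, add_zero]
    subst hb2
    exact key k hk b L (fun v => (hL v).symm) hb ha
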